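/- Let n, r be positive integers, let y > 0, and let W ∈ ℝ^{n×r} be a fixed nonzero matrix. Let Z₁, …, Zₙ be independent random variables where, for each i, ℙ(Z_i = 1) = p_i, ℙ(Z_i = −y) = q_i, and ℙ(Z_i = 0) = 1 − p_i − q_i (with p_i, q_i ≥ 0, p_i + q_i ≤ 1), and let Z̄ ∈ ℝⁿ have coordinates Z̄_i = Z_i − 𝔼[Z_i]. Set M = max_i (p_i + q_i), ‖W‖_{2→∞} = max_i ‖W_{i·}‖₂ (maximum Euclidean norm of a row), and ‖W‖_F the Frobenius norm. Then for every β ≥ 0, ℙ( ‖Z̄ᵀ W‖₂ ≥ r · (max{1,y} (2+β) n / (1 ∨ ln( √n ‖W‖_{2→∞} / ‖W‖_F ))) · ‖W‖_{2→∞} · M ) ≤ 2r · exp( −β n M ). -/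

import Mathlib

open MeasureTheory Real Nat ProbabilityTheory

lemma exp_expand (x : ℝ) : Real.exp x = 1 + x + ∑' n : ℕ, x^(n+2)/(n+2)! := by
  have hs := Real.summable_pow_div_factorial x
  have hs1 : Summable (fun n : ℕ => x ^ (n+1) / (n+1)!) :=
    hs.comp_injective (add_left_injective 1)
  have h0 : Real.exp x = ∑' n : ℕ, x^n / n ! := by
    rw [Real.exp_eq_exp_ℝ, NormedSpace.exp_eq_tsum_div]
  rw [h0, Summable.tsum_eq_zero_add hs, Summable.tsum_eq_zero_add hs1]
  norm_num [add_assoc]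

lemma summable_shift2 (x : ℝ) : Summable (fun n : ℕ => x ^ (n+2) / (n+2)!) :=
  (Real.summable_pow_div_factorial x).comp_injective (add_left_injective 2)

lemma exp_neg_quad {x : ℝ} (hx : x ≤ 0) : Real.exp x ≤ 1 + x + x^2/2 := by
  have key : ∀ z ∈ Set.Iic (0:ℝ), 0 ≤ 1 + z + z^2/2 - Real.exp z := by
    have hmono : AntitoneOn (fun z : ℝ => 1 + z + z^2/2 - Real.exp z) (Set.Iic 0) := by
      apply antitoneOn_of_deriv_nonpos (convex_Iic 0)
      · fun_prop
      · fun_prop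
      · intro z hz
        have hd : HasDerivAt (fun z : ℝ => 1 + z + z^2/2 - Real.exp z)
            (0 + 1 + z - Real.exp z) z := by
          have h1 : HasDerivAt (fun z : ℝ => z^2/2) z z := by
            simpa using ((hasDerivAt_pow 2 z).div_const 2)
          exact (((hasDerivAt_const z (1:ℝ)).add (hasDerivAt_id z)).add h1).sub (Real.hasDerivAt_exp z)
        rw [hd.deriv]
        have := Real.add_one_le_exp z
        linarith
    intro z hz
    have := hmono hz (Set.mem_Iic.mpr le_rfl) (Set.mem_Iic.mp hz)
    simpa using this
  have := key x (Set.mem_Iic.mpr hx)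
  linarith

lemma bennett {u x : ℝ} (hu : 0 < u) (hxu : x ≤ u) :
    Real.exp x ≤ 1 + x + x^2 * Real.exp u / u^2 := by
  have heu : u^2/2 ≤ Real.exp u := by
    have := Real.quadratic_le_exp_of_nonneg hu.le
    nlinarith
  rcases le_or_gt x 0 with hx | hx
  · have h1 := exp_neg_quad hx
    have h2 : x^2/2 ≤ x^2 * Real.exp u / u^2 := by
      rw [div_le_div_iff₀ two_pos (by positivity)]
      nlinarith [sq_nonneg x]
    linarith
  · -- 0 < x ≤ u : series comparison
    have hsx := summable_shift2 x
    have hsu : Summable (fun n : ℕ => x^2/u^2 * (u ^ (n+2) / (n+2)!)) :=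
      (summable_shift2 u).mul_left _
    have hterm : ∀ n : ℕ, x ^ (n+2) / (n+2)! ≤ x^2/u^2 * (u ^ (n+2) / (n+2)!) := by
      intro n
      have hfac : (0:ℝ) < (n+2)! := by positivity
      rw [div_le_iff₀ hfac] at *
      have hxn : x ^ n ≤ u ^ n := pow_le_pow_left₀ hx.le hxu n
      have : x ^ (n+2) = x^2 * x^n := by ring
      rw [this]
      have : x^2/u^2 * (u ^ (n+2) / (n+2)!) * (n+2)! = x^2 * u^n := by
        field_simp
        ring
      rw [this]
      nlinarith [sq_nonneg x]
    have hsum := Summable.tsum_le_tsum hterm hsx hsu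
    have hmul : ∑' n : ℕ, x^2/u^2 * (u ^ (n+2) / (n+2)!) = x^2/u^2 * ∑' n : ℕ, u ^ (n+2) / (n+2)! := by
      exact tsum_mul_left
    have hun : ∑' n : ℕ, u ^ (n+2) / (n+2)! = Real.exp u - 1 - u := by
      have := exp_expand u; linarith
    rw [hmul, hun] at hsum
    have hxx := exp_expand x
    have hfin : x^2/u^2 * (Real.exp u - 1 - u) ≤ x^2 * Real.exp u / u^2 := by
      rw [div_mul_eq_mul_div, mul_comm]
      apply div_le_div_of_nonneg_right ?_ (by positivity)
      nlinarith [sq_nonneg x]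
    linarith

lemma threePoint {Ω : Type} [MeasurableSpace Ω] (μ : Measure Ω) [IsProbabilityMeasure μ]
    (Z : Ω → ℝ) (hZ : Measurable Z) (y p q : ℝ) (hy : 0 < y)
    (hp : 0 ≤ p) (hq : 0 ≤ q) (hpq : p + q ≤ 1)
    (h1 : μ {ω | Z ω = 1} = ENNReal.ofReal p)
    (h2 : μ {ω | Z ω = -y} = ENNReal.ofReal q)
    (h3 : μ {ω | Z ω = 0} = ENNReal.ofReal (1 - p - q))
    (g : ℝ → ℝ) :
    Integrable (fun ω => g (Z ω)) μ ∧
      ∫ ω, g (Z ω) ∂μ = p * g 1 + q * g (-y) + (1 - p - q) * g 0 := by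
  set A := {ω | Z ω = 1} with hA
  set B := {ω | Z ω = -y} with hB
  set C := {ω | Z ω = 0} with hC
  have hmA : MeasurableSet A := hZ (measurableSet_singleton 1)
  have hmB : MeasurableSet B := hZ (measurableSet_singleton (-y))
  have hmC : MeasurableSet C := hZ (measurableSet_singleton 0)
  have hAB : Disjoint A B := by
    rw [Set.disjoint_left]; intro ω h1' h2'
    simp only [hA, hB, Set.mem_setOf_eq] at h1' h2'
    rw [h1'] at h2'; linarith
  have hAC : Disjoint A C := by
    rw [Set.disjoint_left]; intro ω h1' h2'
    simp only [hA, hC, Set.mem_setOf_eq] at h1' h2'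
    rw [h1'] at h2'; linarith
  have hBC : Disjoint B C := by
    rw [Set.disjoint_left]; intro ω h1' h2'
    simp only [hB, hC, Set.mem_setOf_eq] at h1' h2'
    rw [h1'] at h2'; linarith
  have hABC : Disjoint (A ∪ B) C := Set.disjoint_union_left.mpr ⟨hAC, hBC⟩
  have hμAB : μ (A ∪ B) = ENNReal.ofReal (p + q) := by
    rw [measure_union hAB hmB, h1, h2, ← ENNReal.ofReal_add hp hq]
  have hμU : μ (A ∪ B ∪ C) = 1 := by
    rw [measure_union hABC hmC, hμAB, h3, ← ENNReal.ofReal_add (by linarith) (by linarith)]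
    norm_num
  have hcompl : μ (A ∪ B ∪ C)ᶜ = 0 := by
    rw [measure_compl ((hmA.union hmB).union hmC) (measure_ne_top μ _), hμU]
    simp
  set phi : Ω → ℝ := fun ω =>
    A.indicator (fun _ => g 1) ω + B.indicator (fun _ => g (-y)) ω
      + C.indicator (fun _ => g 0) ω with hphi
  have hae : (fun ω => g (Z ω)) =ᵐ[μ] phi := by
    rw [Filter.EventuallyEq, ae_iff]
    refine measure_mono_null ?_ hcompl
    intro ω hω
    simp only [Set.mem_setOf_eq] at hω
    simp only [Set.mem_compl_iff, Set.mem_union]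
    push_neg
    refine ⟨⟨?_, ?_⟩, ?_⟩ <;> intro hmem <;> apply hω
    · have h2' : ω ∉ B := Set.disjoint_left.mp hAB hmem
      have h3' : ω ∉ C := Set.disjoint_left.mp hAC hmem
      simp only [hphi, Set.indicator_of_mem hmem, Set.indicator_of_notMem h2',
        Set.indicator_of_notMem h3']
      simp only [hA, Set.mem_setOf_eq] at hmem
      rw [hmem]; ring
    · have h1' : ω ∉ A := Set.disjoint_right.mp hAB hmem
      have h3' : ω ∉ C := Set.disjoint_left.mp hBC hmem
      simp only [hphi, Set.indicator_of_mem hmem, Set.indicator_of_notMem h1',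
        Set.indicator_of_notMem h3']
      simp only [hB, Set.mem_setOf_eq] at hmem
      rw [hmem]; ring
    · have h1' : ω ∉ A := Set.disjoint_right.mp hAC hmem
      have h2' : ω ∉ B := Set.disjoint_right.mp hBC hmem
      simp only [hphi, Set.indicator_of_mem hmem, Set.indicator_of_notMem h1',
        Set.indicator_of_notMem h2']
      simp only [hC, Set.mem_setOf_eq] at hmem
      rw [hmem]; ring
  have hintphi : Integrable phi μ := by
    refine Integrable.add (Integrable.add ?_ ?_) ?_ <;>
      exact (integrable_const _).indicator (by assumption)
  have hint : Integrable (fun ω => g (Z ω)) μ := hintphi.congr hae.symm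
  refine ⟨hint, ?_⟩
  have iA : Integrable (A.indicator (fun _ => g 1)) μ := (integrable_const _).indicator hmA
  have iB : Integrable (B.indicator (fun _ => g (-y))) μ := (integrable_const _).indicator hmB
  have iC : Integrable (C.indicator (fun _ => g 0)) μ := (integrable_const _).indicator hmC
  have iAB : Integrable (fun a => A.indicator (fun _ => g 1) a
      + B.indicator (fun _ => g (-y)) a) μ := iA.add iB
  rw [integral_congr_ae hae, hphi]
  rw [integral_add iAB iC, integral_add iA iB,
    integral_indicator_const _ hmA, integral_indicator_const _ hmB, integral_indicator_const _ hmC,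
    measureReal_def, measureReal_def, measureReal_def, h1, h2, h3]
  rw [ENNReal.toReal_ofReal hp, ENNReal.toReal_ofReal hq, ENNReal.toReal_ofReal (by linarith)]
  simp [mul_comm]

set_option maxHeartbeats 1000000 in
lemma keyIneq {y p q θ m u : ℝ} (hy : 0 < y) (hm1 : 1 ≤ m) (hym : y ≤ m)
    (hp : 0 ≤ p) (hq : 0 ≤ q) (hpq : p + q ≤ 1) (hu : 0 < u) (hθ : |θ| * (2*m) ≤ u) :
    p * Real.exp (θ * (1 - (p - y*q))) + q * Real.exp (θ * (-y - (p - y*q)))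
      + (1 - p - q) * Real.exp (θ * (0 - (p - y*q)))
    ≤ Real.exp ((p+q) * m^2 * θ^2 * Real.exp u / u^2) := by
  set c : ℝ := p - y*q with hc
  have hq1 : q ≤ 1 := by linarith
  have hcm : -m ≤ c := by nlinarith
  have hcm' : c ≤ m := by nlinarith
  have habs : ∀ d : ℝ, |d| ≤ 2*m → θ * d ≤ u := by
    intro d hd
    calc θ * d ≤ |θ * d| := le_abs_self _
      _ = |θ| * |d| := abs_mul _ _
      _ ≤ |θ| * (2*m) := by
          apply mul_le_mul_of_nonneg_left hd (abs_nonneg _)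
      _ ≤ u := hθ
  have hx1 : θ * (1 - c) ≤ u := habs _ (by rw [abs_le]; constructor <;> nlinarith)
  have hx2 : θ * (-y - c) ≤ u := habs _ (by rw [abs_le]; constructor <;> nlinarith)
  have hx3 : θ * (0 - c) ≤ u := habs _ (by rw [abs_le]; constructor <;> nlinarith)
  have hD : (0:ℝ) ≤ Real.exp u / u^2 := by positivity
  set D : ℝ := Real.exp u / u^2 with hDdef
  have b1 := bennett hu hx1
  have b2 := bennett hu hx2
  have b3 := bennett hu hx3
  have hstep : p * Real.exp (θ * (1 - c)) + q * Real.exp (θ * (-y - c))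
      + (1 - p - q) * Real.exp (θ * (0 - c))
      ≤ p * (1 + θ*(1-c) + (θ*(1-c))^2 * D) + q * (1 + θ*(-y-c) + (θ*(-y-c))^2 * D)
      + (1 - p - q) * (1 + θ*(0-c) + (θ*(0-c))^2 * D) := by
    have e1 : (θ*(1-c))^2 * Real.exp u / u^2 = (θ*(1-c))^2 * D := by rw [hDdef]; ring
    have e2 : (θ*(-y-c))^2 * Real.exp u / u^2 = (θ*(-y-c))^2 * D := by rw [hDdef]; ring
    have e3 : (θ*(0-c))^2 * Real.exp u / u^2 = (θ*(0-c))^2 * D := by rw [hDdef]; ring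
    rw [e1] at b1; rw [e2] at b2; rw [e3] at b3
    have := mul_le_mul_of_nonneg_left b1 hp
    have := mul_le_mul_of_nonneg_left b2 hq
    have := mul_le_mul_of_nonneg_left b3 (by linarith : (0:ℝ) ≤ 1 - p - q)
    linarith
  have hiden : p * (1 + θ*(1-c) + (θ*(1-c))^2 * D) + q * (1 + θ*(-y-c) + (θ*(-y-c))^2 * D)
      + (1 - p - q) * (1 + θ*(0-c) + (θ*(0-c))^2 * D)
      = 1 + D * θ^2 * (p + y^2*q - c^2) := by
    rw [hc]; ring
  have hquad : D * θ^2 * (p + y^2*q - c^2) ≤ (p+q) * m^2 * θ^2 * D := by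
    have hy2 : y^2 ≤ m^2 := by nlinarith
    have hyq : y^2 * q ≤ m^2 * q := mul_le_mul_of_nonneg_right hy2 hq
    have hpm : p ≤ m^2 * p := by
      have h0 : (0:ℝ) ≤ (m^2 - 1) * p := mul_nonneg (by nlinarith) hp
      linarith
    have h1 : p + y^2*q - c^2 ≤ (p+q) * m^2 := by
      have h0 := sq_nonneg c
      have : (p+q) * m^2 = m^2 * p + m^2 * q := by ring
      linarith
    have h2 : (0:ℝ) ≤ D * θ^2 := by positivity
    calc D * θ^2 * (p + y^2*q - c^2) ≤ D * θ^2 * ((p+q) * m^2) :=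
          mul_le_mul_of_nonneg_left h1 h2
      _ = (p+q) * m^2 * θ^2 * D := by ring
  have hfin : 1 + (p+q) * m^2 * θ^2 * D ≤ Real.exp ((p+q) * m^2 * θ^2 * D) := by
    have := Real.add_one_le_exp ((p+q) * m^2 * θ^2 * D)
    linarith
  have heq : (p+q) * m^2 * θ^2 * Real.exp u / u^2
      = (p+q) * m^2 * θ^2 * D := by rw [hDdef]; ring
  rw [heq]
  linarith

set_option maxHeartbeats 1000000 in
lemma tailBound {Ω : Type} [MeasurableSpace Ω] (μ : Measure Ω) [IsProbabilityMeasure μ]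
    (n : ℕ) (y : ℝ) (hy : 0 < y)
    (Z : Fin n → Ω → ℝ) (p q : Fin n → ℝ)
    (hp : ∀ i, 0 ≤ p i) (hq : ∀ i, 0 ≤ q i) (hpq : ∀ i, p i + q i ≤ 1)
    (hmeas : ∀ i, Measurable (Z i))
    (hindep : ProbabilityTheory.iIndepFun Z μ)
    (hd1 : ∀ i, μ {ω | Z i ω = 1} = ENNReal.ofReal (p i))
    (hd2 : ∀ i, μ {ω | Z i ω = -y} = ENNReal.ofReal (q i))
    (hd3 : ∀ i, μ {ω | Z i ω = 0} = ENNReal.ofReal (1 - p i - q i))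
    (m a F L lam M : ℝ) (hm1 : 1 ≤ m) (hym : y ≤ m) (ha : 0 < a)
    (hL : 1 ≤ L)
    (hexp : Real.exp (2*L) * F^2 ≤ Real.exp 2 * (n * a^2))
    (hlam : lam = L / (m*a)) (hM : 0 ≤ M) (hMi : ∀ i, p i + q i ≤ M)
    (β : ℝ) (hβ : 0 ≤ β)
    (w : Fin n → ℝ) (hwa : ∀ i, |w i| ≤ a) (hw2 : ∑ i, (w i)^2 ≤ F^2) :
    μ {ω | (2+β)*n*M ≤ ∑ i, lam * w i * (Z i ω - (p i - y * q i))}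
      ≤ ENNReal.ofReal (Real.exp (-β*n*M)) := by
  have hm0 : (0:ℝ) < m := lt_of_lt_of_le one_pos hm1
  have hL0 : (0:ℝ) < L := lt_of_lt_of_le one_pos hL
  have hlam0 : 0 < lam := by rw [hlam]; positivity
  set u : ℝ := 2*L with hu_def
  have hu : 0 < u := by rw [hu_def]; linarith
  set X : Fin n → Ω → ℝ := fun i ω => lam * w i * (Z i ω - (p i - y * q i)) with hX
  have hXmeas : ∀ i, Measurable (X i) := fun i =>
    ((hmeas i).sub_const _).const_mul _
  have hXindep : iIndepFun X μ := by
    have := hindep.comp (fun i => fun z : ℝ => lam * w i * (z - (p i - y * q i)))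
      (fun i => (measurable_id.sub_const _).const_mul _)
    exact this
  have TP : ∀ i, Integrable (fun ω => Real.exp (1 * X i ω)) μ ∧
      ∫ ω, Real.exp (1 * X i ω) ∂μ
        = p i * Real.exp (1 * (lam * w i * (1 - (p i - y * q i))))
          + q i * Real.exp (1 * (lam * w i * (-y - (p i - y * q i))))
          + (1 - p i - q i) * Real.exp (1 * (lam * w i * (0 - (p i - y * q i)))) := by
    intro i
    exact threePoint μ (Z i) (hmeas i) y (p i) (q i) hy (hp i) (hq i) (hpq i)
      (hd1 i) (hd2 i) (hd3 i)
      (fun z => Real.exp (1 * (lam * w i * (z - (p i - y * q i)))))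
  have hKi : ∀ i, mgf (X i) μ 1 ≤ Real.exp (M * m^2 * (lam * w i)^2 * Real.exp u / u^2) := by
    intro i
    have hθ : |lam * w i| * (2*m) ≤ u := by
      rw [abs_mul, abs_of_pos hlam0]
      have h1 : lam * |w i| ≤ lam * a := mul_le_mul_of_nonneg_left (hwa i) hlam0.le
      have h2 : lam * a * (2*m) = u := by rw [hlam, hu_def]; field_simp
      calc lam * |w i| * (2*m) ≤ lam * a * (2*m) := by
            apply mul_le_mul_of_nonneg_right h1 (by linarith)
        _ = u := h2
    have hki := keyIneq (θ := lam * w i) (u := u) hy hm1 hym (hp i) (hq i) (hpq i) hu hθ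
    have hval : mgf (X i) μ 1
        = p i * Real.exp ((lam * w i) * (1 - (p i - y * q i)))
          + q i * Real.exp ((lam * w i) * (-y - (p i - y * q i)))
          + (1 - p i - q i) * Real.exp ((lam * w i) * (0 - (p i - y * q i))) := by
      rw [mgf]
      rw [(TP i).2]
      ring_nf
    rw [hval]
    refine hki.trans ?_
    rw [Real.exp_le_exp]
    have hnn : (0:ℝ) ≤ m^2 * (lam * w i)^2 * Real.exp u / u^2 := by positivity
    calc (p i + q i) * m^2 * (lam * w i)^2 * Real.exp u / u^2
        = (p i + q i) * (m^2 * (lam * w i)^2 * Real.exp u / u^2) := by ring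
      _ ≤ M * (m^2 * (lam * w i)^2 * Real.exp u / u^2) :=
          mul_le_mul_of_nonneg_right (hMi i) hnn
      _ = M * m^2 * (lam * w i)^2 * Real.exp u / u^2 := by ring
  have hmgfsum : mgf (∑ i, X i) μ 1
      ≤ Real.exp (∑ i : Fin n, M * m^2 * (lam * w i)^2 * Real.exp u / u^2) := by
    rw [hXindep.mgf_sum hXmeas]
    rw [Real.exp_sum]
    exact Finset.prod_le_prod (fun i _ => mgf_nonneg) (fun i _ => hKi i)
  have hKsum : ∑ i : Fin n, M * m^2 * (lam * w i)^2 * Real.exp u / u^2 ≤ 2*n*M := by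
    have hsum1 : ∑ i : Fin n, M * m^2 * (lam * w i)^2 * Real.exp u / u^2
        = (M * m^2 * lam^2 * Real.exp u / u^2) * ∑ i : Fin n, (w i)^2 := by
      rw [Finset.mul_sum]
      congr 1; funext i; ring
    rw [hsum1]
    have hC : (0:ℝ) ≤ M * m^2 * lam^2 * Real.exp u / u^2 := by positivity
    calc (M * m^2 * lam^2 * Real.exp u / u^2) * ∑ i : Fin n, (w i)^2
        ≤ (M * m^2 * lam^2 * Real.exp u / u^2) * F^2 :=
          mul_le_mul_of_nonneg_left hw2 hC
      _ = M * (Real.exp (2*L) * F^2) / (4*a^2) := by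
          rw [hlam, hu_def]; field_simp; ring
      _ ≤ M * (Real.exp 2 * (n * a^2)) / (4*a^2) := by
          apply div_le_div_of_nonneg_right ?_ (by positivity)
          rw [← hu_def]
          exact mul_le_mul_of_nonneg_left hexp hM
      _ = M * n * Real.exp 2 / 4 := by field_simp
      _ ≤ 2*n*M := by
          have he : Real.exp 2 ≤ 8 := by
            have h1 : Real.exp 2 = Real.exp 1 * Real.exp 1 := by
              rw [← Real.exp_add]; norm_num
            have h2 := Real.exp_one_lt_d9
            have h3 : Real.exp 1 * Real.exp 1 < 2.7182818286 * 2.7182818286 :=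
              mul_lt_mul'' h2 h2 (Real.exp_pos 1).le (Real.exp_pos 1).le
            rw [h1]
            nlinarith
          have hMn : (0:ℝ) ≤ M * n := by positivity
          nlinarith
  have h_int_sum : Integrable (fun ω => Real.exp (1 * (∑ i, X i) ω)) μ :=
    hXindep.integrable_exp_mul_sum hXmeas (fun i _ => (TP i).1)
  have hcher := measure_ge_le_exp_mul_mgf (X := ∑ i, X i) (μ := μ) (t := 1)
    ((2+β)*n*M) zero_le_one h_int_sum
  have hset : {ω | (2+β)*n*M ≤ ∑ i, lam * w i * (Z i ω - (p i - y * q i))}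
      = {ω | (2+β)*(n:ℝ)*M ≤ (∑ i, X i) ω} := by
    ext ω
    simp only [Set.mem_setOf_eq, Finset.sum_apply, hX]
  rw [hset]
  have hfin : (μ {ω | (2+β)*(n:ℝ)*M ≤ (∑ i, X i) ω}).toReal ≤ Real.exp (-β*n*M) := by
    refine hcher.trans ?_
    calc Real.exp (-1*((2+β)*n*M)) * mgf (∑ i, X i) μ 1
        ≤ Real.exp (-1*((2+β)*n*M))
            * Real.exp (∑ i : Fin n, M * m^2 * (lam * w i)^2 * Real.exp u / u^2) :=
          mul_le_mul_of_nonneg_left hmgfsum (Real.exp_nonneg _)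
      _ = Real.exp (-1*((2+β)*n*M)
            + ∑ i : Fin n, M * m^2 * (lam * w i)^2 * Real.exp u / u^2) :=
          (Real.exp_add _ _).symm
      _ ≤ Real.exp (-β*n*M) := by
          rw [Real.exp_le_exp]
          linarith
  calc μ {ω | (2+β)*(n:ℝ)*M ≤ (∑ i, X i) ω}
      = ENNReal.ofReal (μ {ω | (2+β)*(n:ℝ)*M ≤ (∑ i, X i) ω}).toReal :=
        (ENNReal.ofReal_toReal (measure_ne_top μ _)).symm
    _ ≤ ENNReal.ofReal (Real.exp (-β*n*M)) := ENNReal.ofReal_le_ofReal hfin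

set_option maxHeartbeats 1000000 in
theorem stmt16 (n r : ℕ) (hn : 0 < n) (hr : 0 < r) (y : ℝ) (hy : 0 < y)
    (W : Matrix (Fin n) (Fin r) ℝ) (hW : W ≠ 0)
    (Ω : Type) (mΩ : MeasurableSpace Ω) (μ : Measure Ω) [IsProbabilityMeasure μ]
    (Z : Fin n → Ω → ℝ) (p q : Fin n → ℝ)
    (hp : ∀ i, 0 ≤ p i) (hq : ∀ i, 0 ≤ q i) (hpq : ∀ i, p i + q i ≤ 1)
    (hmeas : ∀ i, Measurable (Z i))
    (hindep : ProbabilityTheory.iIndepFun Z μ)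
    (hd1 : ∀ i, μ {ω | Z i ω = 1} = ENNReal.ofReal (p i))
    (hd2 : ∀ i, μ {ω | Z i ω = -y} = ENNReal.ofReal (q i))
    (hd3 : ∀ i, μ {ω | Z i ω = 0} = ENNReal.ofReal (1 - p i - q i))
    (β : ℝ) (hβ : 0 ≤ β) :
    -- notation: M = maxᵢ (pᵢ + qᵢ), ‖W‖_{2→∞} = max row ℓ²-norm, ‖W‖_F = Frobenius norm
    μ {ω |
        (r : ℝ) *
            (max 1 y * (2 + β) * n /
              max 1 (Real.log (Real.sqrt n *
                  (Finset.univ.sup' (Finset.univ_nonempty_iff.mpr ⟨⟨0, hn⟩⟩)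
                    fun i => Real.sqrt (∑ j, W i j ^ 2)) /
                Real.sqrt (∑ i, ∑ j, W i j ^ 2)))) *
            (Finset.univ.sup' (Finset.univ_nonempty_iff.mpr ⟨⟨0, hn⟩⟩)
              fun i => Real.sqrt (∑ j, W i j ^ 2)) *
            (Finset.univ.sup' (Finset.univ_nonempty_iff.mpr ⟨⟨0, hn⟩⟩)
              fun i => p i + q i) ≤
          Real.sqrt (∑ j, (∑ i, (Z i ω - ∫ ω', Z i ω' ∂μ) * W i j) ^ 2)}
      ≤ ENNReal.ofReal (2 * r * Real.exp (-β * n *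
          (Finset.univ.sup' (Finset.univ_nonempty_iff.mpr ⟨⟨0, hn⟩⟩)
            fun i => p i + q i))) := by
  set a : ℝ := Finset.univ.sup' (Finset.univ_nonempty_iff.mpr ⟨⟨0, hn⟩⟩)
    (fun i => Real.sqrt (∑ j, W i j ^ 2)) with ha_def
  set M : ℝ := Finset.univ.sup' (Finset.univ_nonempty_iff.mpr ⟨⟨0, hn⟩⟩)
    (fun i => p i + q i) with hM_def
  set Fv : ℝ := Real.sqrt (∑ i, ∑ j, W i j ^ 2) with hFv_def
  set L : ℝ := max 1 (Real.log (Real.sqrt n * a / Fv)) with hL_def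
  set m : ℝ := max 1 y with hm_def
  have hm1 : 1 ≤ m := le_max_left _ _
  have hym : y ≤ m := le_max_right _ _
  have hm0 : (0:ℝ) < m := lt_of_lt_of_le one_pos hm1
  have hL1 : 1 ≤ L := le_max_left _ _
  have hL0 : (0:ℝ) < L := lt_of_lt_of_le one_pos hL1
  -- basic facts about W
  have hrow : ∀ i, Real.sqrt (∑ j, W i j ^ 2) ≤ a := by
    intro i; rw [ha_def]
    exact Finset.le_sup' (fun i => Real.sqrt (∑ j, W i j ^ 2)) (Finset.mem_univ i)
  obtain ⟨i0, j0, hij0⟩ : ∃ i j, W i j ≠ 0 := by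
    by_contra h
    push_neg at h
    exact hW (by ext i j; exact h i j)
  have hrowsum0 : ∀ i, (0:ℝ) ≤ ∑ j, W i j ^ 2 := fun i =>
    Finset.sum_nonneg fun j _ => sq_nonneg _
  have ha0 : 0 < a := by
    refine lt_of_lt_of_le ?_ (hrow i0)
    apply Real.sqrt_pos.mpr
    have h1 : (0:ℝ) < W i0 j0 ^ 2 := by positivity
    have h2 : W i0 j0 ^ 2 ≤ ∑ j, W i0 j ^ 2 :=
      Finset.single_le_sum (f := fun j => W i0 j ^ 2) (fun j _ => sq_nonneg _)
        (Finset.mem_univ j0)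
    linarith
  have hFvsq : Fv ^ 2 = ∑ i, ∑ j, W i j ^ 2 := by
    rw [hFv_def]
    exact Real.sq_sqrt (Finset.sum_nonneg fun i _ => hrowsum0 i)
  have hFvpos : 0 < Fv := by
    rw [hFv_def]
    apply Real.sqrt_pos.mpr
    have h1 : (0:ℝ) < W i0 j0 ^ 2 := by positivity
    have h2 : W i0 j0 ^ 2 ≤ ∑ j, W i0 j ^ 2 :=
      Finset.single_le_sum (f := fun j => W i0 j ^ 2) (fun j _ => sq_nonneg _)
        (Finset.mem_univ j0)
    have h3 : ∑ j, W i0 j ^ 2 ≤ ∑ i, ∑ j, W i j ^ 2 :=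
      Finset.single_le_sum (fun i _ => hrowsum0 i) (Finset.mem_univ i0)
    linarith
  have hFa : Fv ^ 2 ≤ n * a ^ 2 := by
    rw [hFvsq]
    calc ∑ i, ∑ j, W i j ^ 2 ≤ ∑ _i : Fin n, a ^ 2 := by
          apply Finset.sum_le_sum
          intro i _
          have := Real.sqrt_le_sqrt (le_refl (∑ j, W i j ^ 2))
          calc ∑ j, W i j ^ 2 = Real.sqrt (∑ j, W i j ^ 2) ^ 2 :=
                (Real.sq_sqrt (hrowsum0 i)).symm
            _ ≤ a ^ 2 := by
                apply pow_le_pow_left₀ (Real.sqrt_nonneg _) (hrow i)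
      _ = n * a ^ 2 := by
          rw [Finset.sum_const, Finset.card_univ, Fintype.card_fin, nsmul_eq_mul]
  have hexpL : Real.exp (2*L) * Fv^2 ≤ Real.exp 2 * (n * a^2) := by
    rcases le_total (Real.log (Real.sqrt n * a / Fv)) 1 with h | h
    · have hLeq : L = 1 := by rw [hL_def, max_eq_left h]
      rw [hLeq]
      norm_num
      exact mul_le_mul_of_nonneg_left hFa (Real.exp_nonneg 2)
    · have hLeq : L = Real.log (Real.sqrt n * a / Fv) := by rw [hL_def, max_eq_right h]
      have hxpos : 0 < Real.sqrt n * a / Fv := by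
        have : (0:ℝ) < Real.sqrt n := Real.sqrt_pos.mpr (by exact_mod_cast hn)
        positivity
      have hexp2L : Real.exp (2*L) = (Real.sqrt n * a / Fv)^2 := by
        rw [hLeq, two_mul, Real.exp_add, Real.exp_log hxpos]; ring
      rw [hexp2L]
      have heq : (Real.sqrt n * a / Fv)^2 * Fv^2 = n * a^2 := by
        have hs : Real.sqrt n ^ 2 = (n:ℝ) := Real.sq_sqrt (Nat.cast_nonneg n)
        have h1 : (Real.sqrt n * a / Fv)^2 * Fv^2 = (Real.sqrt n * a)^2 := by
          field_simp
        rw [h1, mul_pow, hs]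
      rw [heq]
      nlinarith [Real.one_le_exp (by norm_num : (0:ℝ) ≤ 2), sq_nonneg a,
        Nat.cast_nonneg (α := ℝ) n, mul_nonneg (Nat.cast_nonneg (α := ℝ) n) (sq_nonneg a)]
  have hMi : ∀ i, p i + q i ≤ M := by
    intro i; rw [hM_def]
    exact Finset.le_sup' (fun i => p i + q i) (Finset.mem_univ i)
  have hM0 : 0 ≤ M := le_trans (add_nonneg (hp ⟨0, hn⟩) (hq ⟨0, hn⟩)) (hMi ⟨0, hn⟩)
  set lam : ℝ := L / (m * a) with hlam_def
  have hlam0 : 0 < lam := by rw [hlam_def]; positivity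
  -- expectation of Z i
  have hEZ : ∀ i, (∫ ω', Z i ω' ∂μ) = p i - y * q i := by
    intro i
    have := (threePoint μ (Z i) (hmeas i) y (p i) (q i) hy (hp i) (hq i) (hpq i)
      (hd1 i) (hd2 i) (hd3 i) (fun z => z)).2
    have h2 : ∫ ω', Z i ω' ∂μ = p i * 1 + q i * (-y) + (1 - p i - q i) * 0 := this
    rw [h2]; ring
  simp only [hEZ]
  set t : ℝ := m * (2+β) * n / L * a * M with ht_def
  have ht0 : 0 ≤ t := by
    rw [ht_def]
    have h2β : (0:ℝ) ≤ 2 + β := by linarith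
    positivity
  have hlamt : lam * t = (2+β)*n*M := by
    rw [hlam_def, ht_def]
    field_simp
  have hwa : ∀ (j : Fin r) (i : Fin n), |W i j| ≤ a := by
    intro j i
    rw [← Real.sqrt_sq_eq_abs (W i j)]
    refine le_trans (Real.sqrt_le_sqrt ?_) (hrow i)
    exact Finset.single_le_sum (f := fun j' => W i j' ^ 2) (fun _ _ => sq_nonneg _)
      (Finset.mem_univ j)
  have hw2 : ∀ j : Fin r, ∑ i, (W i j)^2 ≤ Fv^2 := by
    intro j
    rw [hFvsq]
    apply Finset.sum_le_sum
    intro i _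
    exact Finset.single_le_sum (f := fun j' => W i j' ^ 2) (fun _ _ => sq_nonneg _)
      (Finset.mem_univ j)
  have tb : ∀ (w : Fin n → ℝ), (∀ i, |w i| ≤ a) → (∑ i, (w i)^2 ≤ Fv^2) →
      μ {ω | (2+β)*n*M ≤ ∑ i, lam * w i * (Z i ω - (p i - y * q i))}
        ≤ ENNReal.ofReal (Real.exp (-β*n*M)) := by
    intro w h1 h2
    exact tailBound μ n y hy Z p q hp hq hpq hmeas hindep hd1 hd2 hd3
      m a Fv L lam M hm1 hym ha0 hL1 hexpL hlam_def hM0 hMi β hβ w h1 h2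
  have hincl : {ω | (r:ℝ) * (m * (2+β) * n / L) * a * M
        ≤ Real.sqrt (∑ j, (∑ i, (Z i ω - (p i - y * q i)) * W i j)^2)}
      ⊆ ⋃ j : Fin r,
        ({ω | (2+β)*n*M ≤ ∑ i, lam * (W i j) * (Z i ω - (p i - y * q i))}
          ∪ {ω | (2+β)*n*M ≤ ∑ i, lam * (-(W i j)) * (Z i ω - (p i - y * q i))}) := by
    intro ω hω
    simp only [Set.mem_setOf_eq] at hω
    have hrt : (r:ℝ) * (m * (2+β) * n / L) * a * M = r * t := by rw [ht_def]; ring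
    rw [hrt] at hω
    have hrpos : (0:ℝ) < r := by exact_mod_cast hr
    have hr1 : (1:ℝ) ≤ r := by exact_mod_cast hr
    have hS0 : (0:ℝ) ≤ ∑ j, (∑ i, (Z i ω - (p i - y * q i)) * W i j)^2 :=
      Finset.sum_nonneg fun j _ => sq_nonneg _
    have hT0 : (0:ℝ) ≤ r * t := by positivity
    have hT2 : (r*t)^2 ≤ ∑ j, (∑ i, (Z i ω - (p i - y * q i)) * W i j)^2 := by
      have h1 : (r*t)^2 ≤ Real.sqrt (∑ j, (∑ i, (Z i ω - (p i - y * q i)) * W i j)^2) ^ 2 :=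
        pow_le_pow_left₀ hT0 hω 2
      rwa [Real.sq_sqrt hS0] at h1
    have hsumc : ∑ _j : Fin r, (r*t)^2/r ≤ ∑ j, (∑ i, (Z i ω - (p i - y * q i)) * W i j)^2 := by
      have hconst : ∑ _j : Fin r, ((r:ℝ)*t)^2/r = ((r:ℝ)*t)^2 := by
        rw [Finset.sum_const, Finset.card_univ, Fintype.card_fin, nsmul_eq_mul]
        field_simp
      rw [hconst]
      exact hT2
    obtain ⟨j, _, hj⟩ := Finset.exists_le_of_sum_le
      (Finset.univ_nonempty_iff.mpr ⟨⟨0, hr⟩⟩) hsumc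
    have ht2 : t^2 ≤ (∑ i, (Z i ω - (p i - y * q i)) * W i j)^2 := by
      have h1 : ((r:ℝ)*t)^2/r = r * t^2 := by
        field_simp
      have h2 : t^2 ≤ (r:ℝ) * t^2 := by nlinarith [sq_nonneg t]
      linarith
    have htabs : t ≤ |∑ i, (Z i ω - (p i - y * q i)) * W i j| := by
      nlinarith [sq_abs (∑ i, (Z i ω - (p i - y * q i)) * W i j),
        abs_nonneg (∑ i, (Z i ω - (p i - y * q i)) * W i j)]
    rw [Set.mem_iUnion]
    refine ⟨j, ?_⟩
    rcases le_abs.mp htabs with h | h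
    · left
      simp only [Set.mem_setOf_eq]
      have heq : ∑ i, lam * (W i j) * (Z i ω - (p i - y * q i))
          = lam * ∑ i, (Z i ω - (p i - y * q i)) * W i j := by
        rw [Finset.mul_sum]
        exact Finset.sum_congr rfl fun i _ => by ring
      rw [heq, ← hlamt]
      exact mul_le_mul_of_nonneg_left h hlam0.le
    · right
      simp only [Set.mem_setOf_eq]
      have heq : ∑ i, lam * (-(W i j)) * (Z i ω - (p i - y * q i))
          = lam * (-(∑ i, (Z i ω - (p i - y * q i)) * W i j)) := by
        rw [mul_neg, Finset.mul_sum, ← Finset.sum_neg_distrib]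
        exact Finset.sum_congr rfl fun i _ => by ring
      rw [heq, ← hlamt]
      exact mul_le_mul_of_nonneg_left h hlam0.le
  have hwa2 : ∀ j : Fin r, ∀ i, |(-(W i j))| ≤ a := fun j i => by
    rw [abs_neg]; exact hwa j i
  have hw22 : ∀ j : Fin r, ∑ i, (-(W i j))^2 ≤ Fv^2 := fun j => by
    simpa [neg_pow] using hw2 j
  calc μ {ω | (r:ℝ) * (m * (2+β) * n / L) * a * M
        ≤ Real.sqrt (∑ j, (∑ i, (Z i ω - (p i - y * q i)) * W i j)^2)}
      ≤ μ (⋃ j : Fin r,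
        ({ω | (2+β)*n*M ≤ ∑ i, lam * (W i j) * (Z i ω - (p i - y * q i))}
          ∪ {ω | (2+β)*n*M ≤ ∑ i, lam * (-(W i j)) * (Z i ω - (p i - y * q i))})) :=
        measure_mono hincl
    _ ≤ ∑' j : Fin r, μ
        ({ω | (2+β)*n*M ≤ ∑ i, lam * (W i j) * (Z i ω - (p i - y * q i))}
          ∪ {ω | (2+β)*n*M ≤ ∑ i, lam * (-(W i j)) * (Z i ω - (p i - y * q i))}) :=
        measure_iUnion_le _
    _ = ∑ j : Fin r, μ
        ({ω | (2+β)*n*M ≤ ∑ i, lam * (W i j) * (Z i ω - (p i - y * q i))}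
          ∪ {ω | (2+β)*n*M ≤ ∑ i, lam * (-(W i j)) * (Z i ω - (p i - y * q i))}) :=
        tsum_fintype _
    _ ≤ ∑ _j : Fin r, (ENNReal.ofReal (Real.exp (-β*n*M)) + ENNReal.ofReal (Real.exp (-β*n*M))) := by
        apply Finset.sum_le_sum
        intro j _
        refine le_trans (measure_union_le _ _) ?_
        exact add_le_add (tb _ (hwa j) (hw2 j)) (tb _ (hwa2 j) (hw22 j))
    _ = (r : ENNReal) * (ENNReal.ofReal (Real.exp (-β*n*M)) + ENNReal.ofReal (Real.exp (-β*n*M))) := by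
        rw [Finset.sum_const, Finset.card_univ, Fintype.card_fin, nsmul_eq_mul]
    _ = ENNReal.ofReal (2 * r * Real.exp (-β * n * M)) := by
        rw [← ENNReal.ofReal_add (Real.exp_nonneg _) (Real.exp_nonneg _)]
        rw [← ENNReal.ofReal_natCast r]
        rw [← ENNReal.ofReal_mul (Nat.cast_nonneg r)]
        congr 1
        ring
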